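/- Let n ≥ 1 candidates remain, with each ranking ≻ having a nonnegative budget b(≻), and suppose the total budget is Σ_≻ b(≻) = n(n−1)/2 (with candidate set X of size n). Then Σ_{x ∈ X} Σ_≻ min(b(≻), u(≻, x, X)) ≥ 2·Σ_≻ b(≻) whenever b(≻) < n−2 for all ≻ (n ≥ 3); consequently there exists a candidate x with Σ_≻ min(b(≻), u(≻, x, X)) ≥ n−1. -/

import Mathlib

/-- `u(≻, x, X) = |{y ∈ X \ {x} : x ≻ y}|`. -/
def uCand {C : Type*} [DecidableEq C] (r : C → C → Prop) [DecidableRel r]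
    (x : C) (X : Finset C) : ℕ :=
  ((X.erase x).filter (fun y => r x y)).card

lemma uCand_lt {C : Type*} [DecidableEq C] [Fintype C] (r : C → C → Prop) [DecidableRel r]
    (hr : IsStrictTotalOrder C r) {x y : C} (hxy : r x y) :
    uCand r y Finset.univ < uCand r x Finset.univ := by
  have hne : x ≠ y := by rintro rfl; exact hr.irrefl x hxy
  unfold uCand
  apply Finset.card_lt_card
  constructor
  · intro z hz
    simp only [Finset.mem_filter, Finset.mem_erase, Finset.mem_univ, and_true, true_and] at hz ⊢
    obtain ⟨hzy, hyz⟩ := hz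
    refine ⟨?_, hr.trans _ _ _ hxy hyz⟩
    intro h
    rw [h] at hyz
    exact hr.irrefl x (hr.trans _ _ _ hxy hyz)
  · intro hsub
    have : y ∈ (Finset.univ.erase x).filter (fun z => r x z) := by
      simp [Finset.mem_filter, Finset.mem_erase, hne.symm, hxy]
    have := hsub this
    simp [Finset.mem_filter, Finset.mem_erase] at this

theorem stmt_17 {X : Type*} [Fintype X] [DecidableEq X] {n : ℕ} (hn : 3 ≤ n)
    (hcard : Fintype.card X = n)
    {ι : Type*} [Fintype ι] (r : ι → X → X → Prop) [∀ i, DecidableRel (r i)]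
    (hr : ∀ i, IsStrictTotalOrder X (r i))
    (b : ι → ℝ) (hb : ∀ i, 0 ≤ b i)
    (hsum : ∑ i, b i = (n : ℝ) * ((n : ℝ) - 1) / 2)
    (hlt : ∀ i, b i < (n : ℝ) - 2) :
    2 * (∑ i, b i) ≤ ∑ x : X, ∑ i, min (b i) (uCand (r i) x Finset.univ : ℝ) ∧
    ∃ x : X, (n : ℝ) - 1 ≤ ∑ i, min (b i) (uCand (r i) x Finset.univ : ℝ) := by
  -- injectivity of uCand for each i
  have hinj : ∀ i, Function.Injective (fun x => uCand (r i) x Finset.univ) := by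
    intro i x y h
    have h' : uCand (r i) x Finset.univ = uCand (r i) y Finset.univ := h
    by_contra hne
    rcases (show r i x y ∨ x = y ∨ r i y x by by_contra hc; push_neg at hc; exact hc.2.1 ((hr i).trichotomous x y hc.1 hc.2.2)) with hxy | rfl | hyx
    · exact absurd h' (ne_of_gt (uCand_lt (r i) (hr i) hxy))
    · exact hne rfl
    · exact absurd h' (ne_of_lt (uCand_lt (r i) (hr i) hyx))
  -- per-ranking bound: 2 * b i ≤ ∑ x min
  have key : ∀ i, 2 * b i ≤ ∑ x : X, min (b i) (uCand (r i) x Finset.univ : ℝ) := by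
    intro i
    show 2 * b i ≤ ∑ x : X, min (b i) ((uCand (r i) x Finset.univ : ℕ) : ℝ)
    set f := fun x => uCand (r i) x Finset.univ with hf
    set T : Finset X := Finset.univ.filter (fun x => f x < n - 2) with hT
    have hTcard : T.card ≤ n - 2 := by
      have : ∀ x ∈ T, f x ∈ Finset.range (n - 2) := by
        intro x hx
        simp only [hT, Finset.mem_filter] at hx
        simpa using hx.2
      calc T.card ≤ (Finset.range (n - 2)).card :=
            Finset.card_le_card_of_injOn f this (fun a _ c _ h => hinj i h)
        _ = n - 2 := Finset.card_range _
    have hScard : 2 ≤ Tᶜ.card := by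
      have h1 := Finset.card_compl T
      rw [hcard] at h1
      omega
    obtain ⟨x₁, hx₁, x₂, hx₂, hne⟩ := Finset.one_lt_card.mp hScard
    have hub : ∀ x ∈ Tᶜ, b i ≤ (f x : ℝ) := by
      intro x hx
      simp only [hT, Finset.mem_compl, Finset.mem_filter, Finset.mem_univ, true_and,
        not_lt] at hx
      have : ((n : ℝ) - 2) ≤ (f x : ℝ) := by
        have : ((n - 2 : ℕ) : ℝ) ≤ (f x : ℝ) := by exact_mod_cast hx
        have h2 : ((n - 2 : ℕ) : ℝ) = (n : ℝ) - 2 := by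
          have : 2 ≤ n := by omega
          push_cast [this]; ring
        linarith [h2 ▸ this]
      linarith [hlt i]
    have hpair : ({x₁, x₂} : Finset X) ⊆ Finset.univ := Finset.subset_univ _
    have hsum2 : ∑ x ∈ ({x₁, x₂} : Finset X), min (b i) (f x : ℝ)
        ≤ ∑ x : X, min (b i) (f x : ℝ) := by
      apply Finset.sum_le_sum_of_subset_of_nonneg hpair
      intro x _ _
      exact le_min (hb i) (Nat.cast_nonneg _)
    have : ∑ x ∈ ({x₁, x₂} : Finset X), min (b i) (f x : ℝ) = 2 * b i := by
      rw [Finset.sum_pair hne, min_eq_left (hub x₁ hx₁), min_eq_left (hub x₂ hx₂)]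
      ring
    linarith
  have part1 : 2 * (∑ i, b i) ≤ ∑ x : X, ∑ i, min (b i) (uCand (r i) x Finset.univ : ℝ) := by
    rw [Finset.sum_comm, Finset.mul_sum]
    exact Finset.sum_le_sum fun i _ => key i
  refine ⟨part1, ?_⟩
  have hne : (Finset.univ : Finset X).Nonempty := by
    rw [← Finset.card_pos, Finset.card_univ, hcard]; omega
  have htot : ∑ x : X, ((n : ℝ) - 1) ≤ ∑ x : X, ∑ i, min (b i) (uCand (r i) x Finset.univ : ℝ) := by
    have : ∑ x : X, ((n : ℝ) - 1) = 2 * (∑ i, b i) := by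
      rw [Finset.sum_const, Finset.card_univ, hcard, hsum]
      ring
    linarith
  obtain ⟨x, _, hx⟩ := Finset.exists_le_of_sum_le hne htot
  exact ⟨x, hx⟩
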